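/- arXiv:0911.1222 — 2 statements merged into one kernel-verified Lean document; each statement's English description precedes it below -/
import Mathlib

section
/- Let f ∈ ℂ⟦x,y⟧ with jet₃(f) = x²y. Then the ideal ⟨∂f/∂x, ∂f/∂y⟩ + ⟨x,y⟩³ equals ⟨x², xy, y³⟩ modulo ⟨x,y⟩³-adjustments, and dim_ℂ(ℂ⟦x,y⟧ / (⟨∂f/∂x, ∂f/∂y⟩ + ⟨x,y⟩³)) = 4. -/
/- STATEMENT 4: Let f ∈ ℂ⟦x,y⟧ with jet₃(f) = x²y (i.e. f − x²y ∈ ⟨x,y⟩⁴).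
Then the equimultiplicity ideal ⟨∂f/∂x, ∂f/∂y⟩ + ⟨x,y⟩³ equals ⟨x², xy, y³⟩,
and its colength is dim_ℂ(R/(⟨f_x,f_y⟩+m³)) = 4. -/

noncomputable section

abbrev R2 : Type := MvPowerSeries (Fin 2) ℂ

noncomputable def Xv : R2 := MvPowerSeries.X 0
noncomputable def Yv : R2 := MvPowerSeries.X 1

noncomputable def mR2 : Ideal R2 := Ideal.span {Xv, Yv}

/-- formal partial derivative of a power series in two variables -/
noncomputable def pd (i : Fin 2) (f : R2) : R2 :=
  fun m => ((m i : ℂ) + 1) * MvPowerSeries.coeff (m + Finsupp.single i 1) f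

open MvPowerSeries Finsupp

/-- exponent (a, b) as a finsupp -/
def ee (a b : ℕ) : Fin 2 →₀ ℕ := Finsupp.single 0 a + Finsupp.single 1 b

@[simp] lemma ee_apply0 (a b : ℕ) : ee a b 0 = a := by
  simp [ee, Finsupp.single_apply]
@[simp] lemma ee_apply1 (a b : ℕ) : ee a b 1 = b := by
  simp [ee, Finsupp.single_apply]

lemma fin2_eq {m n : Fin 2 →₀ ℕ} (h0 : m 0 = n 0) (h1 : m 1 = n 1) : m = n := by
  ext i
  fin_cases i
  · exact h0
  · exact h1

lemma ee_self (m : Fin 2 →₀ ℕ) : m = ee (m 0) (m 1) := fin2_eq (by simp) (by simp)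

@[simp] lemma ee_inj {a b c d : ℕ} : ee a b = ee c d ↔ a = c ∧ b = d := by
  constructor
  · intro h
    exact ⟨by simpa using congrArg (fun f => f 0) h, by simpa using congrArg (fun f => f 1) h⟩
  · rintro ⟨rfl, rfl⟩; rfl

lemma ee_le {a b c d : ℕ} : ee a b ≤ ee c d ↔ a ≤ c ∧ b ≤ d := by
  rw [Finsupp.le_def]
  constructor
  · intro h; exact ⟨by simpa using h 0, by simpa using h 1⟩
  · rintro ⟨h1, h2⟩ i; fin_cases i <;> simpa

lemma ee_sub {a b c d : ℕ} : ee a b - ee c d = ee (a - c) (b - d) :=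
  fin2_eq (by simp [Finsupp.tsub_apply]) (by simp [Finsupp.tsub_apply])

@[simp] lemma ee_zero : ee 0 0 = 0 := by
  apply fin2_eq <;> simp

lemma Xv_eq : Xv = MvPowerSeries.monomial (ee 1 0) 1 := by
  rw [Xv, X_def, show (Finsupp.single (0 : Fin 2) 1) = ee 1 0 from fin2_eq (by simp) (by simp)]
lemma Yv_eq : Yv = MvPowerSeries.monomial (ee 0 1) 1 := by
  rw [Yv, X_def, show (Finsupp.single (1 : Fin 2) 1) = ee 0 1 from fin2_eq (by simp) (by simp)]
lemma Xv_sq : Xv ^ 2 = MvPowerSeries.monomial (ee 2 0) 1 := by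
  rw [Xv, X_pow_eq, show (Finsupp.single (0 : Fin 2) 2) = ee 2 0 from fin2_eq (by simp) (by simp)]
lemma XvYv : Xv * Yv = MvPowerSeries.monomial (ee 1 1) 1 := by
  rw [Xv_eq, Yv_eq, monomial_mul_monomial, one_mul,
    show ee 1 0 + ee 0 1 = ee 1 1 from fin2_eq (by simp) (by simp)]
lemma Yv_sq : Yv ^ 2 = MvPowerSeries.monomial (ee 0 2) 1 := by
  rw [Yv, X_pow_eq, show (Finsupp.single (1 : Fin 2) 2) = ee 0 2 from fin2_eq (by simp) (by simp)]
lemma Yv_cube : Yv ^ 3 = MvPowerSeries.monomial (ee 0 3) 1 := by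
  rw [Yv, X_pow_eq, show (Finsupp.single (1 : Fin 2) 3) = ee 0 3 from fin2_eq (by simp) (by simp)]
lemma Xv_sq_Yv : Xv ^ 2 * Yv = MvPowerSeries.monomial (ee 2 1) 1 := by
  rw [Xv_sq, Yv_eq, monomial_mul_monomial, one_mul,
    show ee 2 0 + ee 0 1 = ee 2 1 from fin2_eq (by simp) (by simp)]

lemma add_apply' (f g : R2) (m : Fin 2 →₀ ℕ) : (f + g) m = f m + g m := rfl
lemma sub_apply' (f g : R2) (m : Fin 2 →₀ ℕ) : (f - g) m = f m - g m := rfl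

/-- the ideal of series whose coefficients vanish in degree < n -/
def Jid (n : ℕ) : Ideal R2 where
  carrier := {g | ∀ m : Fin 2 →₀ ℕ, m 0 + m 1 < n → g m = 0}
  add_mem' := by
    intro a b ha hb m hm
    show (a + b) m = 0
    rw [add_apply', ha m hm, hb m hm, add_zero]
  zero_mem' := by intro m _; rfl
  smul_mem' := by
    intro c x hx m hm
    show MvPowerSeries.coeff m (c * x) = 0
    rw [coeff_mul]
    apply Finset.sum_eq_zero
    rintro ⟨p, q⟩ hpq
    rw [Finset.HasAntidiagonal.mem_antidiagonal] at hpq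
    have h0 := congrArg (fun f => f 0) hpq
    have h1 := congrArg (fun f => f 1) hpq
    simp only [Finsupp.add_apply] at h0 h1
    have hq : q 0 + q 1 < n := by omega
    show c p * x q = 0
    rw [hx q hq, mul_zero]

lemma mem_Jid {n : ℕ} {g : R2} : g ∈ Jid n ↔ ∀ m : Fin 2 →₀ ℕ, m 0 + m 1 < n → g m = 0 :=
  Iff.rfl

lemma mR2_le_Jid : mR2 ≤ Jid 1 := by
  rw [mR2, Ideal.span_le]
  rintro g (rfl | rfl)
  · intro m hm
    have : MvPowerSeries.coeff m Xv = 0 := by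
      rw [Xv_eq, coeff_monomial, if_neg]
      rintro rfl; simp at hm
    exact this
  · intro m hm
    have : MvPowerSeries.coeff m Yv = 0 := by
      rw [Yv_eq, coeff_monomial, if_neg]
      rintro rfl; simp at hm
    exact this

lemma Jid_mul {a b : ℕ} : Jid a * Jid b ≤ Jid (a + b) := by
  rw [Ideal.mul_le]
  intro f hf g hg m hm
  show MvPowerSeries.coeff m (f * g) = 0
  rw [coeff_mul]
  apply Finset.sum_eq_zero
  rintro ⟨p, q⟩ hpq
  rw [Finset.HasAntidiagonal.mem_antidiagonal] at hpq
  have h0 := congrArg (fun f => f 0) hpq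
  have h1 := congrArg (fun f => f 1) hpq
  simp only [Finsupp.add_apply] at h0 h1
  show f p * g q = 0
  rcases lt_or_ge (p 0 + p 1) a with hp | hp
  · rw [hf p hp, zero_mul]
  · rw [hg q (by omega), mul_zero]

lemma pow_le_Jid : ∀ n : ℕ, mR2 ^ n ≤ Jid n := by
  intro n
  induction n with
  | zero => intro x _ m hm; omega
  | succ k ih =>
    rw [pow_succ]
    exact le_trans (Ideal.mul_mono ih mR2_le_Jid) Jid_mul

/-- view a coefficient function as a power series -/
def toR2 (h : (Fin 2 →₀ ℕ) → ℂ) : R2 := h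

@[simp] lemma toR2_apply (h : (Fin 2 →₀ ℕ) → ℂ) (m : Fin 2 →₀ ℕ) :
    MvPowerSeries.coeff m (toR2 h) = h m := rfl

lemma mem_I {g : R2} (h00 : g (ee 0 0) = 0) (h10 : g (ee 1 0) = 0)
    (h01 : g (ee 0 1) = 0) (h02 : g (ee 0 2) = 0) :
    g ∈ Ideal.span {Xv ^ 2, Xv * Yv, Yv ^ 3} := by
  classical
  have hdec : g = Xv ^ 2 * toR2 (fun p => g (ee (p 0 + 2) (p 1)))
      + (Xv * Yv) * toR2 (fun p => if p 0 = 0 then g (ee 1 (p 1 + 1)) else 0)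
      + Yv ^ 3 * toR2 (fun p => if p 0 = 0 then g (ee 0 (p 1 + 3)) else 0) := by
    ext m
    obtain ⟨a, b, rfl⟩ : ∃ a b, m = ee a b := ⟨m 0, m 1, ee_self m⟩
    rw [map_add, map_add, Xv_sq, XvYv, Yv_cube,
      coeff_monomial_mul, coeff_monomial_mul, coeff_monomial_mul]
    simp only [toR2_apply, ee_le, ee_sub, one_mul, ee_apply0, ee_apply1]
    simp only [coeff_apply]
    rcases Nat.lt_or_ge a 2 with ha | ha
    · rw [if_neg (by omega)]
      interval_cases a
      · rw [if_neg (by omega), zero_add, zero_add]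
        by_cases hb : 3 ≤ b
        · rw [if_pos ⟨Nat.zero_le _, hb⟩, Nat.sub_zero, if_pos rfl,
            Nat.sub_add_cancel hb]
        · rw [if_neg (by omega)]
          interval_cases b
          · exact h00
          · exact h01
          · exact h02
      · rw [zero_add]
        by_cases hb : 1 ≤ b
        · rw [if_pos ⟨le_refl 1, hb⟩, Nat.sub_self, if_pos rfl,
            Nat.sub_add_cancel hb]
          by_cases hb3 : 3 ≤ b
          · rw [if_pos ⟨Nat.zero_le _, hb3⟩, Nat.sub_zero, if_neg (by omega), add_zero]
          · rw [if_neg (by omega), add_zero]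
        · rw [if_neg (by omega), if_neg (by omega), add_zero]
          interval_cases b
          exact h10
    · rw [if_pos ⟨ha, Nat.zero_le b⟩, Nat.sub_add_cancel ha, Nat.sub_zero]
      have h2 : (if 1 ≤ a ∧ 1 ≤ b then (if a - 1 = 0 then g (ee 1 (b - 1 + 1)) else 0) else 0) = 0 := by
        split_ifs with h1 h2
        · omega
        · rfl
        · rfl
      have h3 : (if 0 ≤ a ∧ 3 ≤ b then (if a - 0 = 0 then g (ee 0 (b - 3 + 3)) else 0) else 0) = 0 := by
        split_ifs with h1 h2
        · omega
        · rfl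
        · rfl
      rw [h2, h3, add_zero, add_zero]
  rw [hdec]
  have hx2 : Xv ^ 2 ∈ Ideal.span {Xv ^ 2, Xv * Yv, Yv ^ 3} :=
    Ideal.subset_span (by simp)
  have hxy : Xv * Yv ∈ Ideal.span {Xv ^ 2, Xv * Yv, Yv ^ 3} :=
    Ideal.subset_span (by simp)
  have hy3 : Yv ^ 3 ∈ Ideal.span {Xv ^ 2, Xv * Yv, Yv ^ 3} :=
    Ideal.subset_span (by simp)
  exact Ideal.add_mem _ (Ideal.add_mem _ (Ideal.mul_mem_right _ _ hx2)
    (Ideal.mul_mem_right _ _ hxy)) (Ideal.mul_mem_right _ _ hy3)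

lemma Xv_cube : Xv ^ 3 = MvPowerSeries.monomial (ee 3 0) 1 := by
  rw [Xv, X_pow_eq, show (Finsupp.single (0 : Fin 2) 3) = ee 3 0 from fin2_eq (by simp) (by simp)]
lemma XvYv_sq : Xv * Yv ^ 2 = MvPowerSeries.monomial (ee 1 2) 1 := by
  rw [Xv_eq, Yv_sq, monomial_mul_monomial, one_mul,
    show ee 1 0 + ee 0 2 = ee 1 2 from fin2_eq (by simp) (by simp)]

lemma mem_m3 {g : R2} (h : ∀ m : Fin 2 →₀ ℕ, m 0 + m 1 < 3 → g m = 0) : g ∈ mR2 ^ 3 := by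
  classical
  have hX : Xv ∈ mR2 := Ideal.subset_span (by simp)
  have hY : Yv ∈ mR2 := Ideal.subset_span (by simp)
  have hdec : g = Xv ^ 3 * toR2 (fun p => g (ee (p 0 + 3) (p 1)))
      + (Xv ^ 2 * Yv) * toR2 (fun p => if p 0 = 0 then g (ee 2 (p 1 + 1)) else 0)
      + (Xv * Yv ^ 2) * toR2 (fun p => if p 0 = 0 then g (ee 1 (p 1 + 2)) else 0)
      + Yv ^ 3 * toR2 (fun p => if p 0 = 0 then g (ee 0 (p 1 + 3)) else 0) := by
    ext m
    obtain ⟨a, b, rfl⟩ : ∃ a b, m = ee a b := ⟨m 0, m 1, ee_self m⟩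
    rw [map_add, map_add, map_add, Xv_cube, Xv_sq_Yv, XvYv_sq, Yv_cube,
      coeff_monomial_mul, coeff_monomial_mul, coeff_monomial_mul, coeff_monomial_mul]
    simp only [toR2_apply, ee_le, ee_sub, one_mul, ee_apply0, ee_apply1]
    simp only [coeff_apply]
    rcases Nat.lt_or_ge a 3 with ha | ha
    · interval_cases a
      · -- a = 0
        rw [if_neg (by omega), if_neg (by omega), if_neg (by omega)]
        by_cases hb : 3 ≤ b
        · rw [if_pos ⟨Nat.zero_le _, hb⟩, if_pos (by norm_num), Nat.sub_add_cancel hb,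
            zero_add, zero_add, zero_add]
        · rw [if_neg (by omega)]
          simp only [add_zero, zero_add]
          exact h (ee 0 b) (by simp; omega)
      · -- a = 1
        rw [if_neg (by omega), if_neg (by omega)]
        by_cases hb : 2 ≤ b
        · rw [if_pos ⟨by omega, hb⟩, if_pos (by norm_num), Nat.sub_add_cancel hb]
          have k4 : (if 0 ≤ 1 ∧ 3 ≤ b then (if 1 - 0 = 0 then g (ee 0 (b - 3 + 3)) else 0) else 0) = 0 := by
            split_ifs <;> first | rfl | omega | exact False.elim (by assumption)
          rw [k4, add_zero, zero_add, zero_add]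
        · rw [if_neg (by omega), if_neg (by omega)]
          simp only [add_zero, zero_add]
          exact h (ee 1 b) (by simp; omega)
      · -- a = 2
        rw [if_neg (by omega)]
        by_cases hb : 1 ≤ b
        · rw [if_pos ⟨by omega, hb⟩, if_pos (by norm_num), Nat.sub_add_cancel hb]
          have k3 : (if 1 ≤ 2 ∧ 2 ≤ b then (if 2 - 1 = 0 then g (ee 1 (b - 2 + 2)) else 0) else 0) = 0 := by
            split_ifs <;> first | rfl | omega | exact False.elim (by assumption)
          have k4 : (if 0 ≤ 2 ∧ 3 ≤ b then (if 2 - 0 = 0 then g (ee 0 (b - 3 + 3)) else 0) else 0) = 0 := by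
            split_ifs <;> first | rfl | omega | exact False.elim (by assumption)
          rw [k3, k4, add_zero, add_zero, zero_add]
        · rw [if_neg (by omega), if_neg (by omega), if_neg (by omega)]
          simp only [add_zero, zero_add]
          exact h (ee 2 b) (by simp; omega)
    · -- 3 ≤ a
      rw [if_pos ⟨ha, Nat.zero_le b⟩, Nat.sub_add_cancel ha, Nat.sub_zero]
      have k2 : (if 2 ≤ a ∧ 1 ≤ b then (if a - 2 = 0 then g (ee 2 (b - 1 + 1)) else 0) else 0) = 0 := by
        split_ifs <;> first | rfl | omega | exact False.elim (by assumption)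
      have k3 : (if 1 ≤ a ∧ 2 ≤ b then (if a - 1 = 0 then g (ee 1 (b - 2 + 2)) else 0) else 0) = 0 := by
        split_ifs <;> first | rfl | omega | exact False.elim (by assumption)
      have k4 : (if 0 ≤ a ∧ 3 ≤ b then (if a - 0 = 0 then g (ee 0 (b - 3 + 3)) else 0) else 0) = 0 := by
        split_ifs <;> first | rfl | omega | exact False.elim (by assumption)
      rw [k2, k3, k4, add_zero, add_zero, add_zero]
  rw [hdec]
  refine Ideal.add_mem _ (Ideal.add_mem _ (Ideal.add_mem _ ?_ ?_) ?_) ?_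
  · exact Ideal.mul_mem_right _ _ (Ideal.pow_mem_pow hX 3)
  · refine Ideal.mul_mem_right _ _ ?_
    rw [show (3 : ℕ) = 2 + 1 from rfl, pow_succ]
    exact Ideal.mul_mem_mul (Ideal.pow_mem_pow hX 2) hY
  · refine Ideal.mul_mem_right _ _ ?_
    rw [show (3 : ℕ) = 1 + 2 from rfl, pow_add]
    exact Ideal.mul_mem_mul (by rwa [pow_one]) (Ideal.pow_mem_pow hY 2)
  · exact Ideal.mul_mem_right _ _ (Ideal.pow_mem_pow hY 3)

lemma pd0_apply (f : R2) (a b : ℕ) :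
    pd 0 f (ee a b) = ((a : ℂ) + 1) * f (ee (a + 1) b) := by
  show ((ee a b 0 : ℂ) + 1) * MvPowerSeries.coeff (ee a b + Finsupp.single 0 1) f = _
  rw [show ee a b + Finsupp.single 0 1 = ee (a + 1) b from
      fin2_eq (by simp [Finsupp.single_apply]) (by simp [Finsupp.single_apply]),
    ee_apply0, coeff_apply]

lemma pd1_apply (f : R2) (a b : ℕ) :
    pd 1 f (ee a b) = ((b : ℂ) + 1) * f (ee a (b + 1)) := by
  show ((ee a b 1 : ℂ) + 1) * MvPowerSeries.coeff (ee a b + Finsupp.single 1 1) f = _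
  rw [show ee a b + Finsupp.single 1 1 = ee a (b + 1) from
      fin2_eq (by simp [Finsupp.single_apply]) (by simp [Finsupp.single_apply]),
    ee_apply1, coeff_apply]

lemma K4_aux {x : R2} (hx : x (ee 0 0) = 0 ∧ x (ee 1 0) = 0 ∧ x (ee 0 1) = 0 ∧ x (ee 0 2) = 0)
    {q : Fin 2 →₀ ℕ} (h0 : q 0 = 0 ∧ q 1 ≤ 2 ∨ q 1 = 0 ∧ q 0 ≤ 1) : x q = 0 := by
  obtain ⟨a, b, rfl⟩ : ∃ a b, q = ee a b := ⟨q 0, q 1, ee_self q⟩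
  simp only [ee_apply0, ee_apply1] at h0
  rcases h0 with ⟨rfl, hb⟩ | ⟨rfl, ha⟩
  · interval_cases b
    exacts [hx.1, hx.2.2.1, hx.2.2.2]
  · interval_cases a
    exacts [hx.1, hx.2.1]

/-- the ideal of series vanishing at the exponents (0,0),(1,0),(0,1),(0,2) -/
def K4 : Ideal R2 where
  carrier := {g | g (ee 0 0) = 0 ∧ g (ee 1 0) = 0 ∧ g (ee 0 1) = 0 ∧ g (ee 0 2) = 0}
  add_mem' := by
    rintro a b ⟨a0, a1, a2, a3⟩ ⟨b0, b1, b2, b3⟩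
    refine ⟨?_, ?_, ?_, ?_⟩ <;> rw [add_apply'] <;> simp_all
  zero_mem' := ⟨rfl, rfl, rfl, rfl⟩
  smul_mem' := by
    rintro c x ⟨hx0, hx1, hx2, hx3⟩
    have H : ∀ M : Fin 2 →₀ ℕ, (M 0 = 0 ∧ M 1 ≤ 2 ∨ M 1 = 0 ∧ M 0 ≤ 1) → (c * x) M = 0 := by
      intro M hM
      show MvPowerSeries.coeff M (c * x) = 0
      rw [coeff_mul]
      apply Finset.sum_eq_zero
      rintro ⟨p, q⟩ hpq
      rw [Finset.HasAntidiagonal.mem_antidiagonal] at hpq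
      have h0 := congrArg (fun f => f 0) hpq
      have h1 := congrArg (fun f => f 1) hpq
      simp only [Finsupp.add_apply] at h0 h1
      show c p * x q = 0
      rw [K4_aux ⟨hx0, hx1, hx2, hx3⟩ (by omega), mul_zero]
    exact ⟨H _ (by simp), H _ (by simp), H _ (by simp), H _ (by simp)⟩

lemma I_le_K4 : Ideal.span {Xv ^ 2, Xv * Yv, Yv ^ 3} ≤ K4 := by
  rw [Ideal.span_le]
  rintro t ht
  simp only [Set.mem_insert_iff, Set.mem_singleton_iff] at ht
  rcases ht with rfl | rfl | rfl
  · refine ⟨?_, ?_, ?_, ?_⟩ <;>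
      (show MvPowerSeries.coeff _ (Xv ^ 2) = 0
       rw [Xv_sq, coeff_monomial, if_neg (by
        intro hcon
        have h0 := congrArg (fun f => f 0) hcon
        have h1 := congrArg (fun f => f 1) hcon
        simp only [ee_apply0, ee_apply1, Finsupp.zero_apply] at h0 h1
        omega)])
  · refine ⟨?_, ?_, ?_, ?_⟩ <;>
      (show MvPowerSeries.coeff _ (Xv * Yv) = 0
       rw [XvYv, coeff_monomial, if_neg (by
        intro hcon
        have h0 := congrArg (fun f => f 0) hcon
        have h1 := congrArg (fun f => f 1) hcon
        simp only [ee_apply0, ee_apply1, Finsupp.zero_apply] at h0 h1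
        omega)])
  · refine ⟨?_, ?_, ?_, ?_⟩ <;>
      (show MvPowerSeries.coeff _ (Yv ^ 3) = 0
       rw [Yv_cube, coeff_monomial, if_neg (by
        intro hcon
        have h0 := congrArg (fun f => f 0) hcon
        have h1 := congrArg (fun f => f 1) hcon
        simp only [ee_apply0, ee_apply1, Finsupp.zero_apply] at h0 h1
        omega)])

/-- the linear map sending (c₀,c₁,c₂,c₃) to c₀ + c₁x + c₂y + c₃y² -/
noncomputable def rho : (Fin 4 → ℂ) →ₗ[ℂ] R2 where
  toFun := fun c => MvPowerSeries.C (σ := Fin 2) (c 0) + MvPowerSeries.C (σ := Fin 2) (c 1) * Xv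
    + MvPowerSeries.C (σ := Fin 2) (c 2) * Yv + MvPowerSeries.C (σ := Fin 2) (c 3) * Yv ^ 2
  map_add' := by
    intro c d
    simp only [Pi.add_apply, map_add, add_mul]
    ring
  map_smul' := by
    intro r c
    simp only [Pi.smul_apply, smul_eq_mul, map_mul, RingHom.id_apply, smul_eq_C_mul]
    ring

lemma rho_coeff (c : Fin 4 → ℂ) (a b : ℕ) :
    rho c (ee a b) = (if a = 0 ∧ b = 0 then c 0 else 0) + (if a = 1 ∧ b = 0 then c 1 else 0)
      + (if a = 0 ∧ b = 1 then c 2 else 0) + (if a = 0 ∧ b = 2 then c 3 else 0) := by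
  have hC : ∀ z : ℂ, MvPowerSeries.C (σ := Fin 2) z = MvPowerSeries.monomial (0 : Fin 2 →₀ ℕ) z :=
    fun z => (monomial_zero_eq_C_apply _).symm
  have key : rho c = MvPowerSeries.monomial (ee 0 0) (c 0)
      + MvPowerSeries.monomial (ee 1 0) (c 1)
      + MvPowerSeries.monomial (ee 0 1) (c 2)
      + MvPowerSeries.monomial (ee 0 2) (c 3) := by
    show MvPowerSeries.C (σ := Fin 2) (c 0) + MvPowerSeries.C (σ := Fin 2) (c 1) * Xv
      + MvPowerSeries.C (σ := Fin 2) (c 2) * Yv + MvPowerSeries.C (σ := Fin 2) (c 3) * Yv ^ 2 = _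
    rw [hC, hC, hC, hC, Xv_eq, Yv_sq, Yv_eq, monomial_mul_monomial, monomial_mul_monomial,
      monomial_mul_monomial, ee_zero, zero_add, zero_add, zero_add, mul_one, mul_one, mul_one]
  have conv1 : ∀ (u v : ℕ) (z : ℂ),
      (if ee a b = ee u v then z else 0) = (if a = u ∧ b = v then z else 0) := by
    intro u v z
    by_cases h : a = u ∧ b = v
    · obtain ⟨rfl, rfl⟩ := h
      rw [if_pos rfl, if_pos ⟨rfl, rfl⟩]
    · rw [if_neg (fun hcon => h (ee_inj.mp hcon)), if_neg h]
  have hthis := congrArg (fun h => MvPowerSeries.coeff (ee a b) h) key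
  simp only [map_add, coeff_monomial] at hthis
  rw [show rho c (ee a b) = MvPowerSeries.coeff (ee a b) (rho c) from rfl, hthis,
    conv1, conv1, conv1, conv1]

@[simp] lemma rho_ee00 (c : Fin 4 → ℂ) : rho c (ee 0 0) = c 0 := by
  rw [rho_coeff]; norm_num
@[simp] lemma rho_ee10 (c : Fin 4 → ℂ) : rho c (ee 1 0) = c 1 := by
  rw [rho_coeff]; norm_num
@[simp] lemma rho_ee01 (c : Fin 4 → ℂ) : rho c (ee 0 1) = c 2 := by
  rw [rho_coeff]; norm_num
@[simp] lemma rho_ee02 (c : Fin 4 → ℂ) : rho c (ee 0 2) = c 3 := by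
  rw [rho_coeff]; norm_num

@[simp] lemma rho_zero' (c : Fin 4 → ℂ) : rho c 0 = c 0 := by
  rw [show (0 : Fin 2 →₀ ℕ) = ee 0 0 from ee_zero.symm]
  exact rho_ee00 c


theorem statement4 (f : R2)
    (hjet : f - Xv ^ 2 * Yv ∈ mR2 ^ 4) :
    Ideal.span {pd 0 f, pd 1 f} ⊔ mR2 ^ 3 =
      Ideal.span {Xv ^ 2, Xv * Yv, Yv ^ 3} ∧
    Module.finrank ℂ (R2 ⧸ (Ideal.span {pd 0 f, pd 1 f} ⊔ mR2 ^ 3)) = 4 := by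
  classical
  have hg : ∀ m : Fin 2 →₀ ℕ, m 0 + m 1 < 4 → (f - Xv ^ 2 * Yv) m = 0 :=
    fun m hm => pow_le_Jid 4 hjet m hm
  -- low-degree coefficients of f
  have hx2y : ∀ a b : ℕ, (Xv ^ 2 * Yv) (ee a b) = (if a = 2 ∧ b = 1 then (1 : ℂ) else 0) := by
    intro a b
    show MvPowerSeries.coeff (ee a b) (Xv ^ 2 * Yv) = _
    rw [Xv_sq_Yv, coeff_monomial]
    by_cases h : a = 2 ∧ b = 1
    · obtain ⟨rfl, rfl⟩ := h
      rw [if_pos rfl, if_pos ⟨rfl, rfl⟩]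
    · rw [if_neg (fun hcon => h (ee_inj.mp hcon)), if_neg h]
  have hf : ∀ a b : ℕ, a + b < 4 → f (ee a b) = (if a = 2 ∧ b = 1 then (1 : ℂ) else 0) := by
    intro a b hab
    have h1 := hg (ee a b) (by simpa using hab)
    rw [sub_apply', hx2y] at h1
    linear_combination h1
  -- the two partials of the remainder lie in m³
  have hu3 : pd 0 (f - Xv ^ 2 * Yv) ∈ mR2 ^ 3 := by
    apply mem_m3
    intro m hm
    obtain ⟨a, b, rfl⟩ : ∃ a b, m = ee a b := ⟨m 0, m 1, ee_self m⟩
    simp only [ee_apply0, ee_apply1] at hm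
    rw [pd0_apply, hg (ee (a + 1) b) (by simp; omega), mul_zero]
  have hv3 : pd 1 (f - Xv ^ 2 * Yv) ∈ mR2 ^ 3 := by
    apply mem_m3
    intro m hm
    obtain ⟨a, b, rfl⟩ : ∃ a b, m = ee a b := ⟨m 0, m 1, ee_self m⟩
    simp only [ee_apply0, ee_apply1] at hm
    rw [pd1_apply, hg (ee a (b + 1)) (by simp; omega), mul_zero]
  -- splitting the partials of f
  have hsplit0 : pd 0 f = MvPowerSeries.monomial (ee 1 1) 2 + pd 0 (f - Xv ^ 2 * Yv) := by
    ext m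
    obtain ⟨a, b, rfl⟩ : ∃ a b, m = ee a b := ⟨m 0, m 1, ee_self m⟩
    rw [map_add, coeff_monomial,
      show MvPowerSeries.coeff (ee a b) (pd 0 f) = pd 0 f (ee a b) from rfl,
      show MvPowerSeries.coeff (ee a b) (pd 0 (f - Xv ^ 2 * Yv))
        = pd 0 (f - Xv ^ 2 * Yv) (ee a b) from rfl,
      pd0_apply, pd0_apply, sub_apply', hx2y]
    by_cases h : a = 1 ∧ b = 1
    · obtain ⟨rfl, rfl⟩ := h
      rw [if_pos rfl, if_pos ⟨rfl, rfl⟩]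
      push_cast
      ring
    · rw [if_neg (fun hcon => h (ee_inj.mp hcon)), if_neg (by omega), sub_zero, zero_add]
  have hsplit1 : pd 1 f = Xv ^ 2 + pd 1 (f - Xv ^ 2 * Yv) := by
    ext m
    obtain ⟨a, b, rfl⟩ : ∃ a b, m = ee a b := ⟨m 0, m 1, ee_self m⟩
    rw [map_add,
      show MvPowerSeries.coeff (ee a b) (Xv ^ 2) = (if ee a b = ee 2 0 then (1 : ℂ) else 0) by
        rw [Xv_sq, coeff_monomial],
      show MvPowerSeries.coeff (ee a b) (pd 1 f) = pd 1 f (ee a b) from rfl,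
      show MvPowerSeries.coeff (ee a b) (pd 1 (f - Xv ^ 2 * Yv))
        = pd 1 (f - Xv ^ 2 * Yv) (ee a b) from rfl,
      pd1_apply, pd1_apply, sub_apply', hx2y]
    by_cases h : a = 2 ∧ b = 0
    · obtain ⟨rfl, rfl⟩ := h
      rw [if_pos (ee_inj.mpr ⟨rfl, rfl⟩), if_pos ⟨rfl, rfl⟩]
      push_cast
      ring
    · rw [if_neg (fun hcon => h (ee_inj.mp hcon)), if_neg (by omega), sub_zero, zero_add]
  -- the ideal equality
  have hXmem : Xv ∈ mR2 := Ideal.subset_span (by simp)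
  have hYmem : Yv ∈ mR2 := Ideal.subset_span (by simp)
  have hIeq : Ideal.span {pd 0 f, pd 1 f} ⊔ mR2 ^ 3 = Ideal.span {Xv ^ 2, Xv * Yv, Yv ^ 3} := by
    apply le_antisymm
    · apply sup_le
      · rw [Ideal.span_le]
        rintro t ht
        simp only [Set.mem_insert_iff, Set.mem_singleton_iff] at ht
        rcases ht with rfl | rfl
        · refine mem_I ?_ ?_ ?_ ?_ <;>
            rw [pd0_apply, hf _ _ (by omega), if_neg (by omega), mul_zero]
        · refine mem_I ?_ ?_ ?_ ?_ <;>
            rw [pd1_apply, hf _ _ (by omega), if_neg (by omega), mul_zero]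
      · intro t ht
        have h := pow_le_Jid 3 ht
        refine mem_I ?_ ?_ ?_ ?_ <;> exact h _ (by simp)
    · rw [Ideal.span_le]
      rintro t ht
      simp only [Set.mem_insert_iff, Set.mem_singleton_iff] at ht
      rcases ht with rfl | rfl | rfl
      · have hrw : Xv ^ 2 = pd 1 f - pd 1 (f - Xv ^ 2 * Yv) := by
          rw [hsplit1]; ring
        rw [hrw]
        exact sub_mem
          (Ideal.mem_sup_left (Ideal.subset_span (by simp)))
          (Ideal.mem_sup_right hv3)
      · have h2 : MvPowerSeries.monomial (ee 1 1) 2 = pd 0 f - pd 0 (f - Xv ^ 2 * Yv) := by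
          rw [hsplit0]; ring
        have hrw : Xv * Yv
            = MvPowerSeries.C (σ := Fin 2) 2⁻¹ * (pd 0 f - pd 0 (f - Xv ^ 2 * Yv)) := by
          rw [← h2, XvYv, show MvPowerSeries.C (σ := Fin 2) (2⁻¹ : ℂ)
              = MvPowerSeries.monomial (0 : Fin 2 →₀ ℕ) 2⁻¹ from
              (monomial_zero_eq_C_apply _).symm,
            monomial_mul_monomial, zero_add]
          norm_num
        rw [hrw]
        refine Ideal.mul_mem_left _ _ (sub_mem
          (Ideal.mem_sup_left (Ideal.subset_span (by simp)))
          (Ideal.mem_sup_right hu3))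
      · exact Ideal.mem_sup_right (Ideal.pow_mem_pow hYmem 3)
  refine ⟨hIeq, ?_⟩
  rw [hIeq]
  -- the quotient is 4-dimensional
  set I := Ideal.span {Xv ^ 2, Xv * Yv, Yv ^ 3} with hIdef
  let ψ : (Fin 4 → ℂ) →ₗ[ℂ] (R2 ⧸ I) := (Ideal.Quotient.mkₐ ℂ I).toLinearMap.comp rho
  have hbij : Function.Bijective ψ := by
    constructor
    · intro c d hcd
      have hmem : rho (c - d) ∈ I := by
        rw [← Ideal.Quotient.eq_zero_iff_mem]
        have : ψ (c - d) = ψ c - ψ d := map_sub _ _ _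
        rw [hcd, sub_self] at this
        exact this
      have hk := I_le_K4 hmem
      obtain ⟨k0, k1, k2, k3⟩ := hk
      rw [rho_ee00] at k0
      rw [rho_ee10] at k1
      rw [rho_ee01] at k2
      rw [rho_ee02] at k3
      funext i
      fin_cases i
      · exact sub_eq_zero.mp k0
      · exact sub_eq_zero.mp k1
      · exact sub_eq_zero.mp k2
      · exact sub_eq_zero.mp k3
    · intro q
      obtain ⟨t, rfl⟩ := Ideal.Quotient.mk_surjective q
      refine ⟨![t (ee 0 0), t (ee 1 0), t (ee 0 1), t (ee 0 2)], ?_⟩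
      show Ideal.Quotient.mk I _ = Ideal.Quotient.mk I t
      rw [Ideal.Quotient.eq]
      refine mem_I ?_ ?_ ?_ ?_ <;>
        simp [sub_apply', Matrix.cons_val_zero, Matrix.cons_val_one, Matrix.head_cons]
  have e := LinearEquiv.ofBijective ψ hbij
  rw [← LinearEquiv.finrank_eq e, Module.finrank_pi, Fintype.card_fin]


end
end

section
/- Let f ∈ ℂ⟦x,y⟧ with jet₃(f) = x³. Then dim_ℂ(ℂ⟦x,y⟧ / (⟨∂f/∂x, ∂f/∂y⟩ + ⟨x,y⟩³)) = 5, i.e. the equimultiplicity ideal ⟨x², x·y², y³⟩ has colength 5 with monomial basis {1, x, y, xy, y²} of the quotient. -/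
/- STATEMENT 5: Let f ∈ ℂ⟦x,y⟧ with jet₃(f) = x³ (i.e. f − x³ ∈ ⟨x,y⟩⁴).
Then the equimultiplicity ideal ⟨∂f/∂x, ∂f/∂y⟩ + ⟨x,y⟩³ equals ⟨x², xy², y³⟩
and dim_ℂ(R/(⟨f_x,f_y⟩+m³)) = 5; i.e. ⟨x², xy², y³⟩ has colength 5. -/

noncomputable section

open MvPowerSeries

/-- total degree of an exponent -/
def degE (m : Fin 2 →₀ ℕ) : ℕ := m 0 + m 1

lemma degE_le_of_le {m n : Fin 2 →₀ ℕ} (h : m ≤ n) : degE m ≤ degE n := by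
  have h0 := h 0; have h1 := h 1
  simp only [degE]; omega

/-- ideal of series supported in degrees ≥ k -/
def Dk (k : ℕ) : Ideal R2 where
  carrier := {f | ∀ m : Fin 2 →₀ ℕ, degE m < k → MvPowerSeries.coeff m f = 0}
  zero_mem' := by intro m _; simp
  add_mem' := by intro a b ha hb m hm; rw [map_add, ha m hm, hb m hm, add_zero]
  smul_mem' := by
    classical
    intro c f hf m hm
    rw [smul_eq_mul, MvPowerSeries.coeff_mul]
    refine Finset.sum_eq_zero fun p hp => ?_
    rw [Finset.HasAntidiagonal.mem_antidiagonal] at hp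
    have : degE p.2 ≤ degE m := degE_le_of_le (by rw [← hp]; exact le_add_self)
    rw [hf p.2 (lt_of_le_of_lt this hm), mul_zero]

lemma mem_Dk {k : ℕ} {f : R2} :
    f ∈ Dk k ↔ ∀ m : Fin 2 →₀ ℕ, degE m < k → MvPowerSeries.coeff m f = 0 := Iff.rfl

/-- shift-division by a monomial exponent -/
def shiftDiv (d : Fin 2 →₀ ℕ) (f : R2) : R2 := fun m => MvPowerSeries.coeff (m + d) f

lemma coeff_monomial_mul_shiftDiv (d : Fin 2 →₀ ℕ) (f : R2) (m : Fin 2 →₀ ℕ) :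
    MvPowerSeries.coeff m (MvPowerSeries.monomial d 1 * shiftDiv d f)
      = if d ≤ m then MvPowerSeries.coeff m f else 0 := by
  classical
  rw [MvPowerSeries.coeff_monomial_mul]
  split_ifs with h
  · rw [one_mul, MvPowerSeries.coeff_apply]
    show MvPowerSeries.coeff (m - d + d) f = _
    rw [tsub_add_cancel_of_le h]
  · rfl

lemma mul_X_mem_Dk {k : ℕ} {f : R2} (hf : f ∈ Dk k) (i : Fin 2) :
    f * MvPowerSeries.X i ∈ Dk (k + 1) := by
  classical
  intro m hm
  rw [X_def, MvPowerSeries.coeff_mul_monomial]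
  split_ifs with h
  · rw [mul_one]
    refine hf _ ?_
    have hi := h i
    have h0 := Finsupp.tsub_apply m (Finsupp.single i 1) (0 : Fin 2)
    have h1 := Finsupp.tsub_apply m (Finsupp.single i 1) (1 : Fin 2)
    simp only [degE] at hm ⊢
    rw [h0, h1]
    rcases Fin.exists_fin_two.mp ⟨i, rfl⟩ with rfl | rfl <;>
      simp only [Finsupp.single_eq_same, Finsupp.single_apply] at hi ⊢ <;>
      simp only [show ((1 : Fin 2) = 0) = False by simp, show ((0 : Fin 2) = 1) = False by simp,
        if_true, if_false] <;> omega
  · rfl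

lemma pow_le_Dk (k : ℕ) : mR2 ^ k ≤ Dk k := by
  induction k with
  | zero => intro f _ m hm; omega
  | succ k ih =>
    rw [pow_succ]
    refine Ideal.mul_le.mpr fun r hr s hs => ?_
    obtain ⟨a, b, hab⟩ := Ideal.mem_span_pair.mp hs
    have : r * s = a * (r * Xv) + b * (r * Yv) := by rw [← hab]; ring
    rw [this]
    exact add_mem (Ideal.mul_mem_left _ _ (mul_X_mem_Dk (ih hr) 0))
      (Ideal.mul_mem_left _ _ (mul_X_mem_Dk (ih hr) 1))

lemma eq_zero_finsupp {m : Fin 2 →₀ ℕ} (h0 : m 0 = 0) (h1 : m 1 = 0) : m = 0 := by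
  ext j
  rcases Fin.exists_fin_two.mp ⟨j, rfl⟩ with h | h <;> simp [h, h0, h1]

lemma single_le_iff {i : Fin 2} {m : Fin 2 →₀ ℕ} :
    Finsupp.single i 1 ≤ m ↔ 1 ≤ m i := by
  constructor
  · intro h; simpa using h i
  · intro h j
    rcases eq_or_ne j i with rfl | hne
    · simpa using h
    · simp [Finsupp.single_apply, hne.symm]

lemma Dk_le_pow (k : ℕ) : Dk k ≤ mR2 ^ k := by
  induction k with
  | zero => intro f _; simp
  | succ k ih =>
    intro f hf
    classical
    have hfk : ∀ m : Fin 2 →₀ ℕ, degE m < k + 1 → MvPowerSeries.coeff m f = 0 := hf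
    set A : R2 := shiftDiv (Finsupp.single 0 1) f with hA
    set g : R2 := f - MvPowerSeries.monomial (Finsupp.single 0 1) 1 * A with hg
    set B : R2 := shiftDiv (Finsupp.single 1 1) g with hB
    have hc1 : ∀ m : Fin 2 →₀ ℕ,
        MvPowerSeries.coeff m (MvPowerSeries.monomial (Finsupp.single 0 1) 1 * A)
        = if Finsupp.single 0 1 ≤ m then MvPowerSeries.coeff m f else 0 :=
      fun m => coeff_monomial_mul_shiftDiv _ f m
    have hc2 : ∀ m : Fin 2 →₀ ℕ,
        MvPowerSeries.coeff m (MvPowerSeries.monomial (Finsupp.single 1 1) 1 * B)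
        = if Finsupp.single 1 1 ≤ m then MvPowerSeries.coeff m g else 0 :=
      fun m => coeff_monomial_mul_shiftDiv _ g m
    have hgc : ∀ m : Fin 2 →₀ ℕ, MvPowerSeries.coeff m g =
        if Finsupp.single 0 1 ≤ m then 0 else MvPowerSeries.coeff m f := by
      intro m
      rw [hg, map_sub, hc1]
      split_ifs <;> ring
    have hfeq : f = MvPowerSeries.monomial (Finsupp.single 0 1) 1 * A
        + MvPowerSeries.monomial (Finsupp.single 1 1) 1 * B := by
      apply MvPowerSeries.ext
      intro m
      rw [map_add, hc1, hc2, hgc]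
      by_cases h0 : Finsupp.single 0 1 ≤ m
      · simp [h0]
      by_cases h1 : (Finsupp.single 1 1 : Fin 2 →₀ ℕ) ≤ m
      · simp [h0, h1]
      · have hm0 : m 0 = 0 := by
          rw [single_le_iff] at h0; omega
        have hm1 : m 1 = 0 := by
          rw [single_le_iff] at h1; omega
        have : m = 0 := eq_zero_finsupp hm0 hm1
        subst this
        rw [hfk 0 (by simp [degE]), if_neg h0, if_neg h1, add_zero]
    have hAmem : A ∈ Dk k := by
      intro m hm
      show MvPowerSeries.coeff (m + Finsupp.single 0 1) f = 0
      refine hfk _ ?_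
      simp only [degE, Finsupp.add_apply, Finsupp.single_eq_same,
        show ((1:Fin 2) = 0) = False by simp, show ((0:Fin 2) = 1) = False by simp,
        Finsupp.single_apply, if_false] at hm ⊢
      omega
    have hBmem : B ∈ Dk k := by
      intro m hm
      show MvPowerSeries.coeff (m + Finsupp.single 1 1) g = 0
      rw [hgc]
      split_ifs with h
      · rfl
      refine hfk _ ?_
      simp only [degE, Finsupp.add_apply, Finsupp.single_eq_same,
        show ((1:Fin 2) = 0) = False by simp, show ((0:Fin 2) = 1) = False by simp,
        Finsupp.single_apply, if_false] at hm ⊢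
      omega
    have hX : MvPowerSeries.monomial (Finsupp.single (0 : Fin 2) 1) (1 : ℂ) ∈ mR2 := by
      rw [← MvPowerSeries.X_def]
      exact Ideal.subset_span (Set.mem_insert Xv {Yv})
    have hY : MvPowerSeries.monomial (Finsupp.single (1 : Fin 2) 1) (1 : ℂ) ∈ mR2 := by
      rw [← MvPowerSeries.X_def]
      exact Ideal.subset_span (Set.mem_insert_of_mem Xv rfl)
    rw [hfeq, pow_succ']
    exact add_mem (Ideal.mul_mem_mul hX (ih hAmem)) (Ideal.mul_mem_mul hY (ih hBmem))

/-- exponents not covered by the ideal ⟨x²,xy²,y³⟩ -/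
def Pm (m : Fin 2 →₀ ℕ) : Prop := m 0 ≤ 1 ∧ m 1 ≤ 2 ∧ (m 0 = 0 ∨ m 1 ≤ 1)

lemma le_iff2 {d m : Fin 2 →₀ ℕ} : d ≤ m ↔ d 0 ≤ m 0 ∧ d 1 ≤ m 1 := by
  constructor
  · intro h; exact ⟨h 0, h 1⟩
  · rintro ⟨h0, h1⟩ j
    rcases Fin.exists_fin_two.mp ⟨j, rfl⟩ with rfl | rfl
    · exact h0
    · exact h1

def d1 : Fin 2 →₀ ℕ := Finsupp.single 0 2
def d2 : Fin 2 →₀ ℕ := Finsupp.single 0 1 + Finsupp.single 1 2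
def d3 : Fin 2 →₀ ℕ := Finsupp.single 1 3

lemma d1_apply : d1 0 = 2 ∧ d1 1 = 0 := by simp [d1]
lemma d2_apply : d2 0 = 1 ∧ d2 1 = 2 := by simp [d2, Finsupp.single_apply]
lemma d3_apply : d3 0 = 0 ∧ d3 1 = 3 := by simp [d3]

lemma not_Pm_iff {m : Fin 2 →₀ ℕ} : ¬ Pm m ↔ d1 ≤ m ∨ d2 ≤ m ∨ d3 ≤ m := by
  simp only [Pm, le_iff2, d1_apply.1, d1_apply.2, d2_apply.1, d2_apply.2,
    d3_apply.1, d3_apply.2]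
  omega

lemma hX2 : Xv ^ 2 = MvPowerSeries.monomial d1 1 := MvPowerSeries.X_pow_eq 0 2

lemma hY3 : Yv ^ 3 = MvPowerSeries.monomial d3 1 := MvPowerSeries.X_pow_eq 1 3

lemma hXY2 : Xv * Yv ^ 2 = MvPowerSeries.monomial d2 1 := by
  rw [show Yv ^ 2 = MvPowerSeries.monomial (Finsupp.single 1 2) 1 from
    MvPowerSeries.X_pow_eq 1 2, Xv, MvPowerSeries.X_def,
    MvPowerSeries.monomial_mul_monomial, one_mul, d2]

/-- the target ideal -/
noncomputable def Ie : Ideal R2 := Ideal.span {Xv ^ 2, Xv * Yv ^ 2, Yv ^ 3}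

lemma mem_Ie_of_coeffs {f : R2}
    (h : ∀ m : Fin 2 →₀ ℕ, Pm m → MvPowerSeries.coeff m f = 0) : f ∈ Ie := by
  classical
  set f1 : R2 := f - MvPowerSeries.monomial d1 1 * shiftDiv d1 f with hf1
  set f2 : R2 := f1 - MvPowerSeries.monomial d2 1 * shiftDiv d2 f1 with hf2
  have c1 : ∀ m : Fin 2 →₀ ℕ, MvPowerSeries.coeff m f1 =
      if d1 ≤ m then 0 else MvPowerSeries.coeff m f := by
    intro m
    rw [hf1, map_sub, coeff_monomial_mul_shiftDiv]
    split_ifs <;> ring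
  have c2 : ∀ m : Fin 2 →₀ ℕ, MvPowerSeries.coeff m f2 =
      if d2 ≤ m then 0 else MvPowerSeries.coeff m f1 := by
    intro m
    rw [hf2, map_sub, coeff_monomial_mul_shiftDiv]
    split_ifs <;> ring
  have c3 : f2 = MvPowerSeries.monomial d3 1 * shiftDiv d3 f2 := by
    apply MvPowerSeries.ext
    intro m
    rw [coeff_monomial_mul_shiftDiv]
    split_ifs with h3
    · rfl
    rw [c2]
    split_ifs with h2
    · rfl
    rw [c1]
    split_ifs with h1
    · rfl
    refine h m ?_
    by_contra hc
    rcases not_Pm_iff.mp hc with hd | hd | hd <;> tauto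
  have hfeq : f = MvPowerSeries.monomial d1 1 * shiftDiv d1 f
      + MvPowerSeries.monomial d2 1 * shiftDiv d2 f1
      + MvPowerSeries.monomial d3 1 * shiftDiv d3 f2 := by
    rw [← c3, hf2, hf1]; ring
  rw [hfeq, ← hX2, ← hXY2, ← hY3]
  refine add_mem (add_mem ?_ ?_) ?_
  · exact Ideal.mul_mem_right _ _ (Ideal.subset_span (by left; rfl))
  · exact Ideal.mul_mem_right _ _ (Ideal.subset_span (by right; left; rfl))
  · exact Ideal.mul_mem_right _ _ (Ideal.subset_span (by right; right; rfl))

/-- the ideal of series vanishing on the 5 staircase exponents -/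
def Ep : Ideal R2 where
  carrier := {f | ∀ m : Fin 2 →₀ ℕ, Pm m → MvPowerSeries.coeff m f = 0}
  zero_mem' := by intro m _; simp
  add_mem' := by intro a b ha hb m hm; rw [map_add, ha m hm, hb m hm, add_zero]
  smul_mem' := by
    classical
    intro c f hf m hm
    rw [smul_eq_mul, MvPowerSeries.coeff_mul]
    refine Finset.sum_eq_zero fun p hp => ?_
    rw [Finset.HasAntidiagonal.mem_antidiagonal] at hp
    have hle : p.2 ≤ m := by rw [← hp]; exact le_add_self
    have : Pm p.2 := by
      obtain ⟨l0, l1⟩ := le_iff2.mp hle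
      obtain ⟨a1, a2, a3⟩ := hm
      exact ⟨by omega, by omega, by omega⟩
    rw [hf p.2 this, mul_zero]

lemma Ie_le_Ep : Ie ≤ Ep := by
  rw [Ie]
  refine Ideal.span_le.mpr ?_
  rintro g (rfl | rfl | rfl)
  · rw [hX2]
    intro m hm
    rw [MvPowerSeries.coeff_monomial]
    split_ifs with h
    · subst h; obtain ⟨a1, _, _⟩ := hm; rw [d1_apply.1] at a1; omega
    · rfl
  · rw [hXY2]
    intro m hm
    rw [MvPowerSeries.coeff_monomial]
    split_ifs with h
    · subst h
      obtain ⟨a1, a2, a3⟩ := hm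
      rw [d2_apply.1] at a1 a3; rw [d2_apply.2] at a2 a3; omega
    · rfl
  · rw [hY3]
    intro m hm
    rw [MvPowerSeries.coeff_monomial]
    split_ifs with h
    · subst h; obtain ⟨_, a2, _⟩ := hm; rw [d3_apply.2] at a2; omega
    · rfl

lemma mem_Ie_iff {f : R2} :
    f ∈ Ie ↔ ∀ m : Fin 2 →₀ ℕ, Pm m → MvPowerSeries.coeff m f = 0 :=
  ⟨fun h => Ie_le_Ep h, mem_Ie_of_coeffs⟩

lemma Dk3_le_Ie : Dk 3 ≤ Ie := by
  intro f hf
  refine mem_Ie_of_coeffs fun m hm => hf m ?_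
  obtain ⟨a1, a2, a3⟩ := hm
  simp only [degE]
  omega

def av : Fin 5 → ℕ := ![0, 1, 0, 1, 0]
def bv : Fin 5 → ℕ := ![0, 0, 1, 1, 2]

def ev (j : Fin 5) : Fin 2 →₀ ℕ := Finsupp.single 0 (av j) + Finsupp.single 1 (bv j)

lemma ev_apply (j : Fin 5) : ev j 0 = av j ∧ ev j 1 = bv j := by
  simp [ev, Finsupp.single_apply]

lemma finsupp_eq (m : Fin 2 →₀ ℕ) : m = Finsupp.single 0 (m 0) + Finsupp.single 1 (m 1) := by
  ext j
  rcases Fin.exists_fin_two.mp ⟨j, rfl⟩ with rfl | rfl <;> simp [Finsupp.single_apply]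

lemma Pm_ev (j : Fin 5) : Pm (ev j) := by
  unfold Pm
  rw [(ev_apply j).1, (ev_apply j).2]
  fin_cases j <;> simp [av, bv]

noncomputable def phi : R2 →ₗ[ℂ] (Fin 5 → ℂ) :=
  LinearMap.pi fun j => MvPowerSeries.coeff (ev j)

lemma ev_ne {j j' : Fin 5} (h : j ≠ j') : ev j ≠ ev j' := by
  intro he
  have h0 : av j = av j' := by rw [← (ev_apply j).1, ← (ev_apply j').1, he]
  have h1 : bv j = bv j' := by rw [← (ev_apply j).2, ← (ev_apply j').2, he]
  fin_cases j <;> fin_cases j' <;> simp_all [av, bv]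

lemma ker_phi : LinearMap.ker phi = Submodule.restrictScalars ℂ Ie := by
  ext f
  rw [LinearMap.mem_ker, Submodule.restrictScalars_mem, mem_Ie_iff]
  constructor
  · intro h m hm
    obtain ⟨a1, a2, a3⟩ := hm
    have key : ∃ j : Fin 5, m = ev j := by
      have : (m 0 = 0 ∧ m 1 = 0) ∨ (m 0 = 1 ∧ m 1 = 0) ∨ (m 0 = 0 ∧ m 1 = 1) ∨
          (m 0 = 1 ∧ m 1 = 1) ∨ (m 0 = 0 ∧ m 1 = 2) := by omega
      rcases this with ⟨u, v⟩ | ⟨u, v⟩ | ⟨u, v⟩ | ⟨u, v⟩ | ⟨u, v⟩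
      · exact ⟨0, by rw [finsupp_eq m, u, v]; rfl⟩
      · exact ⟨1, by rw [finsupp_eq m, u, v]; rfl⟩
      · exact ⟨2, by rw [finsupp_eq m, u, v]; rfl⟩
      · exact ⟨3, by rw [finsupp_eq m, u, v]; rfl⟩
      · exact ⟨4, by rw [finsupp_eq m, u, v]; rfl⟩
    obtain ⟨j, rfl⟩ := key
    exact congrFun h j
  · intro h
    funext j
    exact h (ev j) (Pm_ev j)

lemma phi_surj : Function.Surjective phi := by
  classical
  intro v
  refine ⟨∑ j : Fin 5, MvPowerSeries.monomial (ev j) (v j), ?_⟩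
  funext j
  show MvPowerSeries.coeff (ev j) (∑ j' : Fin 5, MvPowerSeries.monomial (ev j') (v j')) = v j
  rw [map_sum]
  rw [Finset.sum_eq_single j]
  · simp
  · intro j' _ hne
    rw [MvPowerSeries.coeff_monomial_ne (ev_ne hne.symm)]
  · intro hj; exact absurd (Finset.mem_univ j) hj

lemma finrank_Ie : Module.finrank ℂ (R2 ⧸ Ie) = 5 := by
  have e1 : (R2 ⧸ Submodule.restrictScalars ℂ Ie) ≃ₗ[ℂ] (Fin 5 → ℂ) := by
    rw [← ker_phi]
    exact phi.quotKerEquivOfSurjective phi_surj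
  have e2 : (R2 ⧸ Submodule.restrictScalars ℂ Ie) ≃ₗ[ℂ] (R2 ⧸ Ie) :=
    Submodule.Quotient.restrictScalarsEquiv ℂ Ie
  rw [← e2.finrank_eq, e1.finrank_eq]
  simp

lemma coeff_pd (i : Fin 2) (f : R2) (m : Fin 2 →₀ ℕ) :
    MvPowerSeries.coeff m (pd i f)
      = ((m i : ℂ) + 1) * MvPowerSeries.coeff (m + Finsupp.single i 1) f := rfl

lemma pd_add (i : Fin 2) (a b : R2) : pd i (a + b) = pd i a + pd i b := by
  apply MvPowerSeries.ext
  intro m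
  rw [map_add, coeff_pd, coeff_pd, coeff_pd, map_add]
  ring

lemma pd_mem_Dk3 {g : R2} (hg : g ∈ Dk 4) (i : Fin 2) : pd i g ∈ Dk 3 := by
  intro m hm
  rw [coeff_pd, hg, mul_zero]
  have h0 := Finsupp.add_apply m (Finsupp.single i 1) (0 : Fin 2)
  have h1 := Finsupp.add_apply m (Finsupp.single i 1) (1 : Fin 2)
  simp only [degE] at hm ⊢
  rw [h0, h1]
  rcases Fin.exists_fin_two.mp ⟨i, rfl⟩ with rfl | rfl <;>
    simp only [Finsupp.single_eq_same, Finsupp.single_apply,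
      show ((1 : Fin 2) = 0) = False by simp, show ((0 : Fin 2) = 1) = False by simp,
      if_true, if_false] <;> omega

lemma pd0_X3 : pd 0 (Xv ^ 3) = MvPowerSeries.monomial d1 3 := by
  apply MvPowerSeries.ext
  intro m
  rw [coeff_pd, show Xv ^ 3 = MvPowerSeries.monomial (Finsupp.single 0 3) 1 from
    MvPowerSeries.X_pow_eq 0 3, MvPowerSeries.coeff_monomial, MvPowerSeries.coeff_monomial]
  have hc : (m + Finsupp.single 0 1 = Finsupp.single 0 3) ↔ m = d1 := by
    rw [show (Finsupp.single 0 3 : Fin 2 →₀ ℕ) = d1 + Finsupp.single 0 1 by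
      rw [d1, ← Finsupp.single_add]]
    exact add_left_injective _ |>.eq_iff
  rw [if_congr hc rfl rfl]
  split_ifs with h
  · subst h; rw [d1]; simp; norm_num
  · ring

lemma pd1_X3 : pd 1 (Xv ^ 3) = 0 := by
  apply MvPowerSeries.ext
  intro m
  rw [coeff_pd, show Xv ^ 3 = MvPowerSeries.monomial (Finsupp.single 0 3) 1 from
    MvPowerSeries.X_pow_eq 0 3, MvPowerSeries.coeff_monomial]
  rw [if_neg, mul_zero, map_zero]
  intro h
  have := DFunLike.congr_fun h 1
  simp [Finsupp.single_apply] at this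

theorem statement5 (f : R2)
    (hjet : f - Xv ^ 3 ∈ mR2 ^ 4) :
    Ideal.span {pd 0 f, pd 1 f} ⊔ mR2 ^ 3 =
      Ideal.span {Xv ^ 2, Xv * Yv ^ 2, Yv ^ 3} ∧
    Module.finrank ℂ (R2 ⧸ (Ideal.span {pd 0 f, pd 1 f} ⊔ mR2 ^ 3)) = 5 ∧
    Module.finrank ℂ
      (R2 ⧸ (Ideal.span {Xv ^ 2, Xv * Yv ^ 2, Yv ^ 3} : Ideal R2)) = 5 := by
  have hIe : (Ideal.span {Xv ^ 2, Xv * Yv ^ 2, Yv ^ 3} : Ideal R2) = Ie := rfl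
  have hg4 : f - Xv ^ 3 ∈ Dk 4 := pow_le_Dk 4 hjet
  have hfg : f = Xv ^ 3 + (f - Xv ^ 3) := by ring
  have h1 : pd 0 f = MvPowerSeries.monomial d1 3 + pd 0 (f - Xv ^ 3) := by
    rw [show pd 0 f = pd 0 (Xv ^ 3 + (f - Xv ^ 3)) from congrArg _ hfg, pd_add, pd0_X3]
  have h2 : pd 1 f = pd 1 (f - Xv ^ 3) := by
    rw [show pd 1 f = pd 1 (Xv ^ 3 + (f - Xv ^ 3)) from congrArg _ hfg, pd_add, pd1_X3,
      zero_add]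
  have ha : pd 0 (f - Xv ^ 3) ∈ mR2 ^ 3 := Dk_le_pow 3 (pd_mem_Dk3 hg4 0)
  have hb : pd 1 (f - Xv ^ 3) ∈ mR2 ^ 3 := Dk_le_pow 3 (pd_mem_Dk3 hg4 1)
  have hm3 : mR2 ^ 3 ≤ Ie := le_trans (pow_le_Dk 3) Dk3_le_Ie
  -- the ideal equality
  have hmain : Ideal.span {pd 0 f, pd 1 f} ⊔ mR2 ^ 3 = Ie := by
    apply le_antisymm
    · refine sup_le (Ideal.span_le.mpr ?_) hm3
      rintro g (rfl | rfl)
      · rw [h1]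
        refine add_mem ?_ (hm3 ha)
        have : MvPowerSeries.monomial d1 (3 : ℂ)
            = MvPowerSeries.monomial (0 : Fin 2 →₀ ℕ) (3 : ℂ) * (Xv ^ 2) := by
          rw [hX2, MvPowerSeries.monomial_mul_monomial, zero_add, mul_one]
        rw [this]
        exact Ideal.mul_mem_left _ _ (Ideal.subset_span (by left; rfl))
      · rw [h2]; exact hm3 hb
    · rw [← hIe]
      refine Ideal.span_le.mpr ?_
      have hpd0 : pd 0 f ∈ Ideal.span {pd 0 f, pd 1 f} ⊔ mR2 ^ 3 :=
        le_sup_left (α := Ideal R2) (Ideal.subset_span (by left; rfl))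
      have hm3L : mR2 ^ 3 ≤ Ideal.span {pd 0 f, pd 1 f} ⊔ mR2 ^ 3 := le_sup_right
      rintro g (rfl | rfl | rfl)
      · have hmon : MvPowerSeries.monomial d1 (3 : ℂ)
            = pd 0 f - pd 0 (f - Xv ^ 3) := by rw [h1]; ring
        have : Xv ^ 2 = MvPowerSeries.monomial (0 : Fin 2 →₀ ℕ) ((3 : ℂ)⁻¹)
            * (pd 0 f - pd 0 (f - Xv ^ 3)) := by
          rw [← hmon, MvPowerSeries.monomial_mul_monomial, zero_add, hX2]
          norm_num
        rw [this]
        exact Ideal.mul_mem_left _ _ (sub_mem hpd0 (hm3L ha))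
      · refine hm3L (Dk_le_pow 3 ?_)
        rw [hXY2]
        intro m hm
        rw [MvPowerSeries.coeff_monomial]
        split_ifs with h
        · subst h
          simp only [degE, d2_apply.1, d2_apply.2] at hm
          omega
        · rfl
      · refine hm3L (Dk_le_pow 3 ?_)
        rw [hY3]
        intro m hm
        rw [MvPowerSeries.coeff_monomial]
        split_ifs with h
        · subst h
          simp only [degE, d3_apply.1, d3_apply.2] at hm
          omega
        · rfl
  refine ⟨by rw [hmain, hIe], ?_, ?_⟩
  · rw [hmain]; exact finrank_Ie
  · rw [hIe]; exact finrank_Ie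
end
end
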